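/- arXiv:1601.07768 — 6 statements merged into one kernel-verified Lean document; each statement's English description precedes it below -/
import Mathlib

section
/- Let M ≥ 1, let P_1, …, P_M ≥ 0 with Σ_{m=1}^{M} P_m > 0, let Q_M := 1 − Σ_{m=1}^{M} P_m ∈ [0, 1), and let R > 0. Suppose λ : (0, ∞) → ℝ is such that for each θ > 0, λ(θ) ∈ (0, 1) and λ(θ)^M = Σ_{m=1}^{M} P_m e^{−θR} λ(θ)^{M−m} + Q_M. Then lim_{θ → 0⁺} ( −ln(λ(θ)) / θ ) = R (1 − Q_M) / ( Σ_{m=1}^{M} m P_m + M Q_M ). -/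
set_option maxHeartbeats 2000000 in
/-- Corollary 3: the effective capacity of truncated-HARQ
converges to the throughput as `θ → 0⁺`. If for each `θ > 0`, `λ(θ) ∈ (0,1)`
solves the characteristic equation
`λ^M = ∑_{m=1}^{M} P_m e^{-θR} λ^{M-m} + Q_M`, then
`-ln(λ(θ))/θ → R (1 - Q_M) / (∑_{m=1}^{M} m P_m + M Q_M)` as `θ → 0⁺`. -/
theorem effective_capacity_tendsto_throughput
    (M : ℕ) (hM : 1 ≤ M)
    (P : ℕ → ℝ) (hP : ∀ m ∈ Finset.Icc 1 M, 0 ≤ P m)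
    (hPpos : 0 < ∑ m ∈ Finset.Icc 1 M, P m)
    (Q : ℝ) (hQdef : Q = 1 - ∑ m ∈ Finset.Icc 1 M, P m) (hQ0 : 0 ≤ Q)
    (R : ℝ) (hR : 0 < R)
    (lam : ℝ → ℝ)
    (hlam : ∀ θ : ℝ, 0 < θ → 0 < lam θ ∧ lam θ < 1 ∧
      lam θ ^ M = (∑ m ∈ Finset.Icc 1 M,
        P m * Real.exp (-(θ * R)) * lam θ ^ (M - m)) + Q) :
    Filter.Tendsto (fun θ : ℝ => -Real.log (lam θ) / θ)
      (nhdsWithin 0 (Set.Ioi 0))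
      (nhds (R * (1 - Q) /
        ((∑ m ∈ Finset.Icc 1 M, (m : ℝ) * P m) + (M : ℝ) * Q))) := by
  classical
  have hSum : ∑ m ∈ Finset.Icc 1 M, P m = 1 - Q := by rw [hQdef]; ring
  have h1Q : (0:ℝ) < 1 - Q := hSum ▸ hPpos
  obtain ⟨m0, hm0A, hp⟩ : ∃ m ∈ Finset.Icc 1 M, 0 < P m := by
    apply Finset.exists_lt_of_sum_lt (f := fun _ => (0:ℝ))
    simpa using hPpos
  obtain ⟨hm01, hm0M⟩ := Finset.mem_Icc.mp hm0A
  set S : ℝ → ℝ := fun x => ∑ m ∈ Finset.Icc 1 M, P m * x ^ (M - m) with hSdef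
  set g : ℝ → ℝ := fun x => Real.log (S x) - Real.log (x ^ M - Q) with hgdef
  -- rewrite the characteristic equation
  have heq : ∀ θ : ℝ, 0 < θ →
      lam θ ^ M = Real.exp (-(θ * R)) * S (lam θ) + Q := by
    intro θ hθ
    have h := (hlam θ hθ).2.2
    rw [h, hSdef]
    simp only [Finset.mul_sum]
    congr 1
    exact Finset.sum_congr rfl fun m _ => by ring
  -- positivity of S on (0,∞)
  have hSpos : ∀ x : ℝ, 0 < x → 0 < S x := by
    intro x hx
    apply Finset.sum_pos'
    · intro m hm
      exact mul_nonneg (hP m hm) (pow_pos hx _).le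
    · exact ⟨m0, hm0A, mul_pos hp (pow_pos hx _)⟩
  -- upper bound S x ≤ 1 - Q on [0,1]
  have hSle : ∀ x : ℝ, 0 ≤ x → x ≤ 1 → S x ≤ 1 - Q := by
    intro x hx0 hx1
    rw [← hSum]
    apply Finset.sum_le_sum
    intro m hm
    have := pow_le_one₀ hx0 hx1 (n := M - m)
    nlinarith [hP m hm]
  -- lower bound S x ≥ (1-Q) x^(M-1) on [0,1]
  have hSge : ∀ x : ℝ, 0 ≤ x → x ≤ 1 → (1 - Q) * x ^ (M - 1) ≤ S x := by
    intro x hx0 hx1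
    rw [← hSum, Finset.sum_mul]
    apply Finset.sum_le_sum
    intro m hm
    have hmm := Finset.mem_Icc.mp hm
    have hle : M - m ≤ M - 1 := Nat.sub_le_sub_left hmm.1 M
    have := pow_le_pow_of_le_one hx0 hx1 hle
    nlinarith [hP m hm]
  -- key identity : θ * R = g (lam θ)
  have hkey : ∀ θ : ℝ, 0 < θ → θ * R = g (lam θ) := by
    intro θ hθ
    obtain ⟨hx0, hx1, -⟩ := hlam θ hθ
    have hS := hSpos _ hx0
    have hxe : lam θ ^ M - Q = Real.exp (-(θ * R)) * S (lam θ) := by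
      have := heq θ hθ; linarith
    have hxQ : (0:ℝ) < lam θ ^ M - Q := by
      rw [hxe]; positivity
    rw [hgdef]
    simp only
    rw [hxe, Real.log_mul (Real.exp_ne_zero _) (ne_of_gt hS), Real.log_exp]
    ring
  -- lower bound lam θ ≥ p/2 when exp(-(θR)) ≥ 1/2
  set p := P m0 with hpdef
  have hlb : ∀ θ : ℝ, 0 < θ → (1:ℝ)/2 ≤ Real.exp (-(θ * R)) → p / 2 ≤ lam θ := by
    intro θ hθ he
    obtain ⟨hx0, hx1, -⟩ := hlam θ hθ
    set x := lam θ with hxdef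
    have hterm : p * x ^ (M - m0) ≤ S x := by
      apply Finset.single_le_sum (f := fun m => P m * x ^ (M - m)) _ hm0A
      intro m hm
      exact mul_nonneg (hP m hm) (pow_pos hx0 _).le
    have hE : (0:ℝ) < Real.exp (-(θ * R)) := Real.exp_pos _
    have h1 : Real.exp (-(θ * R)) * (p * x ^ (M - m0)) ≤ x ^ M := by
      have := heq θ hθ
      nlinarith
    have hsplit : x ^ M = x ^ m0 * x ^ (M - m0) := by
      rw [← pow_add]; congr 1; omega
    have hpw : (0:ℝ) < x ^ (M - m0) := pow_pos hx0 _
    have h2 : Real.exp (-(θ * R)) * p ≤ x ^ m0 := by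
      rw [hsplit] at h1
      have := (mul_le_mul_iff_of_pos_right hpw).mp (by linarith : Real.exp (-(θ * R)) * p * x ^ (M - m0) ≤ x ^ m0 * x ^ (M - m0))
      linarith
    have h3 : x ^ m0 ≤ x := pow_le_of_le_one hx0.le hx1.le (by omega)
    nlinarith
  -- main squeeze bound
  set c : ℝ := p / 2 with hcdef
  have hc0 : 0 < c := by positivity
  have hcpow : (0:ℝ) < c ^ (M - 1) := pow_pos hc0 _
  set C : ℝ := (1 - Q) / c ^ (M - 1) with hCdef
  have hlow : ∀ θ : ℝ, 0 < θ → (1:ℝ)/2 ≤ Real.exp (-(θ * R)) →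
      1 - (1 - Real.exp (-(θ * R))) * C ≤ lam θ := by
    intro θ hθ he
    obtain ⟨hx0, hx1, -⟩ := hlam θ hθ
    set x := lam θ with hxdef
    set E := Real.exp (-(θ * R)) with hEdef
    have hE0 : 0 < E := Real.exp_pos _
    have hE1 : E ≤ 1 := by
      rw [hEdef]
      exact Real.exp_le_one_iff.mpr (by nlinarith)
    set ε : ℝ := (1 - E) * (1 - Q) with hεdef
    have hε0 : 0 ≤ ε := by
      apply mul_nonneg <;> linarith
    -- x^M ≥ x^(M-1) - ε
    have hSx_le := hSle x hx0.le hx1.le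
    have hSx_ge := hSge x hx0.le hx1.le
    have hQx : Q * x ^ (M - 1) ≤ Q := by
      have := pow_le_one₀ hx0.le hx1.le (n := M - 1)
      nlinarith
    have hstep : x ^ (M - 1) - ε ≤ x ^ M := by
      have h := heq θ hθ
      -- x^M = E * S x + Q = S x + Q - (1-E) S x
      nlinarith
    have hxpow : x ^ (M - 1) * x = x ^ M := by
      rw [← pow_succ]; congr 1; omega
    have hcx : c ≤ x := hlb θ hθ he
    have hcpx : c ^ (M - 1) ≤ x ^ (M - 1) :=
      pow_le_pow_left₀ hc0.le hcx _
    have hmain : c ^ (M - 1) * (1 - x) ≤ ε := by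
      have h1 : x ^ (M - 1) * (1 - x) = x ^ (M - 1) - x ^ M := by
        rw [← hxpow]; ring
      have h2 : x ^ (M - 1) * (1 - x) ≤ ε := by rw [h1]; linarith
      have h3 : c ^ (M - 1) * (1 - x) ≤ x ^ (M - 1) * (1 - x) :=
        mul_le_mul_of_nonneg_right hcpx (by linarith)
      linarith
    have : 1 - x ≤ ε / c ^ (M - 1) := by
      rw [le_div_iff₀ hcpow]
      linarith [hmain]
    have hCε : ε / c ^ (M - 1) = (1 - E) * C := by
      rw [hεdef, hCdef, mul_div_assoc]
    linarith [hCε ▸ this]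
  -- lam θ → 1 as θ → 0+
  have hto1 : Filter.Tendsto lam (nhdsWithin 0 (Set.Ioi 0)) (nhds 1) := by
    have hEcont : Filter.Tendsto (fun θ : ℝ => Real.exp (-(θ * R)))
        (nhds 0) (nhds 1) := by
      have hc : Continuous fun θ : ℝ => Real.exp (-(θ * R)) :=
        Real.continuous_exp.comp ((continuous_id.mul continuous_const).neg)
      have h0 : Real.exp (-((0:ℝ) * R)) = 1 := by norm_num
      exact h0 ▸ hc.tendsto 0
    have hEcont' : Filter.Tendsto (fun θ : ℝ => Real.exp (-(θ * R)))
        (nhdsWithin 0 (Set.Ioi 0)) (nhds 1) := hEcont.mono_left nhdsWithin_le_nhds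
    have hEev : ∀ᶠ θ in nhdsWithin 0 (Set.Ioi 0), (1:ℝ)/2 ≤ Real.exp (-(θ * R)) := by
      filter_upwards [hEcont'.eventually (eventually_gt_nhds (by norm_num : (1:ℝ)/2 < 1))]
        with θ h using h.le
    have hθev : ∀ᶠ θ : ℝ in nhdsWithin (0:ℝ) (Set.Ioi 0), 0 < θ :=
      eventually_mem_nhdsWithin
    apply tendsto_of_tendsto_of_tendsto_of_le_of_le'
      (g := fun θ : ℝ => 1 - (1 - Real.exp (-(θ * R))) * C)
      (h := fun _ : ℝ => (1:ℝ))
    · have : Filter.Tendsto (fun θ : ℝ => 1 - (1 - Real.exp (-(θ * R))) * C)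
          (nhds 0) (nhds (1 - (1 - 1) * C)) := by
        apply Filter.Tendsto.sub tendsto_const_nhds
        exact (hEcont.const_sub 1).mul_const C
      simpa using this.mono_left nhdsWithin_le_nhds
    · exact tendsto_const_nhds
    · filter_upwards [hEev, hθev] with θ he hθ using hlow θ hθ he
    · filter_upwards [hθev] with θ hθ using (hlam θ hθ).2.1.le
  have hne1 : Filter.Tendsto lam (nhdsWithin 0 (Set.Ioi 0)) (nhdsWithin 1 {(1:ℝ)}ᶜ) := by
    rw [tendsto_nhdsWithin_iff]
    refine ⟨hto1, ?_⟩
    filter_upwards [eventually_mem_nhdsWithin] with θ hθ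
    exact ne_of_lt (hlam θ hθ).2.1
  -- derivative of -log at 1
  have hf : Filter.Tendsto (slope (fun y : ℝ => -Real.log y) 1)
      (nhdsWithin 1 {(1:ℝ)}ᶜ) (nhds (-1)) := by
    have h : HasDerivAt (fun y : ℝ => -Real.log y) (-1) 1 := by
      have := (Real.hasDerivAt_log one_ne_zero).neg
      rw [inv_one] at this; exact this
    exact hasDerivAt_iff_tendsto_slope.mp h
  -- derivative of g at 1
  set T : ℝ := ∑ m ∈ Finset.Icc 1 M, (m : ℝ) * P m with hTdef
  have hT : ∑ m ∈ Finset.Icc 1 M, P m * ((M - m : ℕ) : ℝ)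
      = (M : ℝ) * (1 - Q) - T := by
    rw [← hSum, Finset.mul_sum, hTdef, ← Finset.sum_sub_distrib]
    apply Finset.sum_congr rfl
    intro m hm
    have hmm := Finset.mem_Icc.mp hm
    rw [Nat.cast_sub hmm.2]
    ring
  have hTpos : 0 < T + (M:ℝ) * Q := by
    have h1 : ∑ m ∈ Finset.Icc 1 M, P m ≤ T := by
      rw [hTdef]
      apply Finset.sum_le_sum
      intro m hm
      have hmm := Finset.mem_Icc.mp hm
      have h1m : (1:ℝ) ≤ (m:ℝ) := by exact_mod_cast hmm.1
      calc P m = 1 * P m := (one_mul _).symm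
        _ ≤ (m:ℝ) * P m := mul_le_mul_of_nonneg_right h1m (hP m hm)
    have : (0:ℝ) ≤ (M:ℝ) * Q := by positivity
    linarith
  set D : ℝ := -(T + (M:ℝ) * Q) / (1 - Q) with hDdef
  have hDne : D ≠ 0 := by
    rw [hDdef]
    apply div_ne_zero _ (ne_of_gt h1Q)
    intro h; linarith
  have hS1 : S 1 = 1 - Q := by
    rw [hSdef]; simp [hSum]
  have hg1 : g 1 = 0 := by
    rw [hgdef]; simp [hS1]
  have hgderiv : HasDerivAt g D 1 := by
    have hS' : HasDerivAt S (∑ m ∈ Finset.Icc 1 M, P m * ((M - m : ℕ) : ℝ)) 1 := by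
      rw [hSdef]
      apply HasDerivAt.fun_sum
      intro m _
      have := (hasDerivAt_pow (M - m) (1:ℝ)).const_mul (P m)
      simpa using this
    have hS1ne : S 1 ≠ 0 := by rw [hS1]; exact ne_of_gt h1Q
    have hpow : HasDerivAt (fun x : ℝ => x ^ M - Q) ((M:ℝ)) 1 := by
      have := (hasDerivAt_pow M (1:ℝ)).sub_const Q
      simpa using this
    have hpow1 : (1:ℝ) ^ M - Q ≠ 0 := by simp; linarith
    have h := (hS'.log hS1ne).sub (hpow.log hpow1)
    have heqD : (∑ m ∈ Finset.Icc 1 M, P m * ((M - m : ℕ) : ℝ)) / S 1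
        - (M:ℝ) / ((1:ℝ) ^ M - Q) = D := by
      rw [hT, hS1, hDdef]
      simp only [one_pow]
      field_simp
      ring
    rw [hgdef, ← heqD]
    exact h
  have hg : Filter.Tendsto (slope g 1) (nhdsWithin 1 {(1:ℝ)}ᶜ) (nhds D) :=
    hasDerivAt_iff_tendsto_slope.mp hgderiv
  -- combine
  have hA : Filter.Tendsto (fun θ => slope (fun y : ℝ => -Real.log y) 1 (lam θ))
      (nhdsWithin 0 (Set.Ioi 0)) (nhds (-1)) := hf.comp hne1
  have hB : Filter.Tendsto (fun θ => slope g 1 (lam θ))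
      (nhdsWithin 0 (Set.Ioi 0)) (nhds D) := hg.comp hne1
  have hdiv : Filter.Tendsto
      (fun θ => R * (slope (fun y : ℝ => -Real.log y) 1 (lam θ) / slope g 1 (lam θ)))
      (nhdsWithin 0 (Set.Ioi 0)) (nhds (R * (-1 / D))) :=
    (hA.div hB hDne).const_mul R
  have hval : R * (-1 / D) = R * (1 - Q) / (T + (M:ℝ) * Q) := by
    have h1Qne : (1:ℝ) - Q ≠ 0 := ne_of_gt h1Q
    have hTne : T + (M:ℝ) * Q ≠ 0 := ne_of_gt hTpos
    have hinv : -1 / D = (1 - Q) / (T + (M:ℝ) * Q) := by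
      rw [div_eq_div_iff hDne hTne, hDdef]
      field_simp
    rw [hinv, mul_div_assoc]
  rw [← hval]
  apply hdiv.congr'
  filter_upwards [eventually_mem_nhdsWithin] with θ hθ
  have hθ' : 0 < θ := hθ
  obtain ⟨hx0, hx1, -⟩ := hlam θ hθ'
  have hkeyθ := hkey θ hθ'
  have hx1ne : lam θ - 1 ≠ 0 := by intro h; nlinarith
  have hθR : θ * R ≠ 0 := by positivity
  rw [slope_def_field, slope_def_field, hg1, ← hkeyθ]
  simp only [Real.log_one, neg_zero]
  field_simp
  ring
end

section
/- Let P_1, P_2 ≥ 0 with P_1 + P_2 ≤ 1, Q_2 := 1 − P_1 − P_2, and suppose P_2 + Q_2 > 0. Let θ, R > 0 and set a_1 := P_1 e^{−θR}, a_2 := P_2 e^{−θR} + Q_2. Then λ_+ := (a_1 + √(a_1² + 4 a_2))/2 satisfies λ_+² − a_1 λ_+ − a_2 = 0, λ_+ > 0, λ_+ is at least the absolute value of the other root of this quadratic, and the effective capacity satisfies −ln(λ_+)/θ = R − (1/θ) ln( ( P_1 + √( P_1² + 4 (P_2 e^{θR} + Q_2 e^{2θR}) ) ) / 2 ). -/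
/-- Corollary 5: closed-form effective capacity of
truncated-HARQ with `M = 2`. With `a₁ = P₁ e^{-θR}`,
`a₂ = P₂ e^{-θR} + Q₂`, the quantity `λ₊ = (a₁ + √(a₁² + 4a₂))/2` solves
`λ² - a₁λ - a₂ = 0`, is positive, dominates the other root in absolute
value, and
`-ln(λ₊)/θ = R - (1/θ) ln((P₁ + √(P₁² + 4(P₂ e^{θR} + Q₂ e^{2θR})))/2)`. -/
theorem truncated_HARQ_M2_effective_capacity
    (P1 P2 : ℝ) (hP1 : 0 ≤ P1) (hP2 : 0 ≤ P2) (hsum : P1 + P2 ≤ 1)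
    (Q2 : ℝ) (hQ2 : Q2 = 1 - P1 - P2) (hpos : 0 < P2 + Q2)
    (θ R : ℝ) (hθ : 0 < θ) (hR : 0 < R)
    (a1 a2 : ℝ)
    (ha1 : a1 = P1 * Real.exp (-(θ * R)))
    (ha2 : a2 = P2 * Real.exp (-(θ * R)) + Q2)
    (lamp : ℝ) (hlamp : lamp = (a1 + Real.sqrt (a1 ^ 2 + 4 * a2)) / 2) :
    lamp ^ 2 - a1 * lamp - a2 = 0 ∧
    0 < lamp ∧
    |(a1 - Real.sqrt (a1 ^ 2 + 4 * a2)) / 2| ≤ lamp ∧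
    -Real.log lamp / θ = R - (1 / θ) * Real.log
      ((P1 + Real.sqrt (P1 ^ 2 +
        4 * (P2 * Real.exp (θ * R) + Q2 * Real.exp (2 * θ * R)))) / 2) := by
  have hθR : 0 < θ * R := mul_pos hθ hR
  have hE : 0 < Real.exp (-(θ * R)) := Real.exp_pos _
  have hE1 : Real.exp (-(θ * R)) < 1 := by
    rw [Real.exp_lt_one_iff]; linarith
  have hQ2nn : 0 ≤ Q2 := by rw [hQ2]; linarith
  have ha1nn : 0 ≤ a1 := by rw [ha1]; positivity
  have ha2pos : 0 < a2 := by
    rw [ha2]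
    rcases hP2.lt_or_eq with h | h
    · have : 0 < P2 * Real.exp (-(θ * R)) := mul_pos h hE
      linarith
    · have : 0 < Q2 := by rw [← h] at hpos; linarith
      nlinarith
  have hDpos : 0 < a1 ^ 2 + 4 * a2 := by positivity
  have hsq : Real.sqrt (a1 ^ 2 + 4 * a2) ^ 2 = a1 ^ 2 + 4 * a2 :=
    Real.sq_sqrt hDpos.le
  have hsgt : a1 < Real.sqrt (a1 ^ 2 + 4 * a2) := by
    nlinarith [Real.sqrt_nonneg (a1 ^ 2 + 4 * a2)]
  have hlpos : 0 < lamp := by rw [hlamp]; linarith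
  refine ⟨by rw [hlamp]; nlinarith, hlpos, ?_, ?_⟩
  · rw [abs_of_nonpos (by linarith), hlamp]; linarith
  · -- rewrite lamp as exp(-θR) * S
    set T : ℝ := P2 * Real.exp (θ * R) + Q2 * Real.exp (2 * θ * R) with hT
    have hTpos : 0 < T := by
      have h1 : (1:ℝ) ≤ Real.exp (θ * R) := by
        rw [Real.one_le_exp_iff]; linarith
      have h2 : Real.exp (θ * R) ≤ Real.exp (2 * θ * R) := by
        apply Real.exp_le_exp.mpr; nlinarith
      have hEp : 0 < Real.exp (θ * R) := Real.exp_pos _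
      nlinarith
    have hSpos : 0 < (P1 + Real.sqrt (P1 ^ 2 + 4 * T)) / 2 := by
      have : Real.sqrt (4 * T) ≤ Real.sqrt (P1 ^ 2 + 4 * T) := by
        apply Real.sqrt_le_sqrt; nlinarith
      have h4 : 0 < Real.sqrt (4 * T) := Real.sqrt_pos.mpr (by linarith)
      linarith
    have hfac : lamp = Real.exp (-(θ * R)) * ((P1 + Real.sqrt (P1 ^ 2 + 4 * T)) / 2) := by
      have hD : a1 ^ 2 + 4 * a2 = Real.exp (-(θ * R)) ^ 2 * (P1 ^ 2 + 4 * T) := by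
        rw [ha1, ha2, hT]
        have he2 : Real.exp (-(θ * R)) * Real.exp (θ * R) = 1 := by
          rw [← Real.exp_add]; ring_nf; exact Real.exp_zero
        have he3 : Real.exp (-(θ * R)) ^ 2 * Real.exp (2 * θ * R) = 1 := by
          rw [sq, ← Real.exp_add, ← Real.exp_add, show -(θ * R) + -(θ * R) + 2 * θ * R = 0 by ring, Real.exp_zero]
        linear_combination (-4 * P2 * Real.exp (-(θ * R))) * he2 + (-4 * Q2) * he3
      rw [hlamp, hD, Real.sqrt_mul (by positivity), Real.sqrt_sq hE.le, ha1]
      ring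
    rw [hfac, Real.log_mul (by positivity) (by positivity), Real.log_exp]
    field_simp
    ring
end

section
/- Let M ≥ 1, let P_1, …, P_M ≥ 0 with Σ_{m=1}^{M} P_m > 0, let Q_M := 1 − Σ_{m=1}^{M} P_m ∈ [0, 1), let R > 0, and let ψ > 0 satisfy Q_M e^{ψM} < 1. Define C := R ψ / ( ln( Σ_{m=1}^{M} P_m e^{ψ m} ) − ln( 1 − Q_M e^{ψ M} ) ) and θ := ψ / C. Then C > 0, and λ := e^{−ψ} satisfies the truncated-HARQ characteristic equation λ^M = Σ_{m=1}^{M} P_m e^{−θR} λ^{M−m} + Q_M; equivalently, e^{θR} = ( Σ_{m=1}^{M} P_m e^{ψ m} ) / ( 1 − Q_M e^{ψ M} ). -/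
/-- Corollary 7: truncated-HARQ effective capacity expressed
in the QoS-parameter `ψ`. With
`C = Rψ / (ln(∑_{m=1}^{M} P_m e^{ψm}) - ln(1 - Q_M e^{ψM}))` and `θ = ψ/C`,
one has `C > 0`, `λ = e^{-ψ}` satisfies the truncated-HARQ characteristic
equation `λ^M = ∑_{m=1}^{M} P_m e^{-θR} λ^{M-m} + Q_M`, and equivalently
`e^{θR} = (∑_{m=1}^{M} P_m e^{ψm})/(1 - Q_M e^{ψM})`. -/
theorem effective_capacity_in_psi_truncated_HARQ
    (M : ℕ) (hM : 1 ≤ M)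
    (P : ℕ → ℝ) (hP : ∀ m ∈ Finset.Icc 1 M, 0 ≤ P m)
    (hPpos : 0 < ∑ m ∈ Finset.Icc 1 M, P m)
    (Q : ℝ) (hQdef : Q = 1 - ∑ m ∈ Finset.Icc 1 M, P m) (hQ0 : 0 ≤ Q)
    (R : ℝ) (hR : 0 < R)
    (ψ : ℝ) (hψ : 0 < ψ) (hQψ : Q * Real.exp (ψ * M) < 1)
    (C : ℝ) (hC : C = R * ψ /
      (Real.log (∑ m ∈ Finset.Icc 1 M, P m * Real.exp (ψ * m))
        - Real.log (1 - Q * Real.exp (ψ * M))))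
    (θ : ℝ) (hθ : θ = ψ / C) :
    0 < C ∧
    Real.exp (-ψ) ^ M = (∑ m ∈ Finset.Icc 1 M,
        P m * Real.exp (-(θ * R)) * Real.exp (-ψ) ^ (M - m)) + Q ∧
    Real.exp (θ * R) = (∑ m ∈ Finset.Icc 1 M, P m * Real.exp (ψ * m)) /
      (1 - Q * Real.exp (ψ * M)) := by
  set S : ℝ := ∑ m ∈ Finset.Icc 1 M, P m * Real.exp (ψ * m) with hS
  set E : ℝ := Real.exp (ψ * M) with hE
  have hden : 0 < 1 - Q * E := by linarith
  -- exists a positive P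
  obtain ⟨m0, hm0, hm0pos⟩ : ∃ m ∈ Finset.Icc 1 M, 0 < P m := by
    by_contra h
    push_neg at h
    have := Finset.sum_nonpos h
    linarith
  have hterm : ∀ i ∈ Finset.Icc 1 M, P i ≤ P i * Real.exp (ψ * i) := by
    intro i hi
    have hi1 : (1:ℕ) ≤ i := (Finset.mem_Icc.mp hi).1
    have hexp : 1 < Real.exp (ψ * i) := by
      have : (0:ℝ) < ψ * i := by
        have : (1:ℝ) ≤ i := by exact_mod_cast hi1
        nlinarith
      exact Real.one_lt_exp_iff.mpr this
    nlinarith [hP i hi]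
  have hSgt : 1 - Q * E < S := by
    have h1 : (∑ m ∈ Finset.Icc 1 M, P m) < S := by
      apply Finset.sum_lt_sum hterm
      refine ⟨m0, hm0, ?_⟩
      have hi1 : (1:ℕ) ≤ m0 := (Finset.mem_Icc.mp hm0).1
      have hexp : 1 < Real.exp (ψ * m0) := by
        have hp : (0:ℝ) < ψ * m0 := by
          have : (1:ℝ) ≤ m0 := by exact_mod_cast hi1
          nlinarith
        exact Real.one_lt_exp_iff.mpr hp
      nlinarith
    have hE1 : 1 ≤ E := by
      rw [hE]
      exact Real.one_le_exp (by positivity)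
    nlinarith
  have hSpos : 0 < S := lt_trans hden hSgt
  have hD : 0 < Real.log S - Real.log (1 - Q * E) :=
    sub_pos.mpr (Real.log_lt_log hden hSgt)
  have hCpos : 0 < C := by
    rw [hC]; positivity
  have hθR : θ * R = Real.log S - Real.log (1 - Q * E) := by
    rw [hθ, hC]
    field_simp
  have hthird : Real.exp (θ * R) = S / (1 - Q * E) := by
    rw [hθR, Real.exp_sub, Real.exp_log hSpos, Real.exp_log hden]
  refine ⟨hCpos, ?_, hthird⟩
  have hinv : Real.exp (-(θ * R)) = (1 - Q * E) / S := by
    rw [Real.exp_neg, hthird]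
    field_simp
  have hpt : ∀ m ∈ Finset.Icc 1 M,
      P m * Real.exp (-(θ * R)) * Real.exp (-ψ) ^ (M - m)
        = ((1 - Q * E) / S * Real.exp (-(ψ * M))) * (P m * Real.exp (ψ * m)) := by
    intro m hm
    have hmM : m ≤ M := (Finset.mem_Icc.mp hm).2
    have hpow : Real.exp (-ψ) ^ (M - m) = Real.exp (ψ * m) * Real.exp (-(ψ * M)) := by
      rw [← Real.exp_nat_mul, ← Real.exp_add]
      congr 1
      have : ((M - m : ℕ) : ℝ) = (M : ℝ) - m := by
        have := Nat.cast_sub hmM (R := ℝ); simpa using this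
      rw [this]; ring
    rw [hinv, hpow]; ring
  rw [Finset.sum_congr rfl hpt, ← Finset.mul_sum, ← hS]
  have hEinv : E * Real.exp (-(ψ * M)) = 1 := by
    rw [hE, ← Real.exp_add]; simp
  have hpowM : Real.exp (-ψ) ^ M = Real.exp (-(ψ * M)) := by
    rw [← Real.exp_nat_mul]; ring_nf
  rw [hpowM]
  field_simp
  nlinarith [hEinv]
end

section
/- Let ψ > 0, Θ̃ > 0, and R > 0 be real. Define C := R / (1 + Θ̃ (e^{ψ} − 1)/ψ) and θ := ψ / C. Then 0 < C < R, θ > 0, θ R = ψ + Θ̃(e^{ψ} − 1), and λ := e^{−ψ} satisfies the persistent-RR Rayleigh characteristic relation e^{θR} = λ^{−1} e^{−Θ̃(1 − 1/λ)}. -/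
/-- Corollary 12: persistent-RR Rayleigh effective capacity
in the QoS-parameter `ψ`. With `C = R/(1 + Θ̃(e^ψ - 1)/ψ)` and `θ = ψ/C`,
one has `0 < C < R`, `θ > 0`, `θR = ψ + Θ̃(e^ψ - 1)`, and `λ = e^{-ψ}`
satisfies the characteristic relation `e^{θR} = λ^{-1} e^{-Θ̃(1 - 1/λ)}`. -/
theorem RR_rayleigh_effective_capacity_psi
    (ψ Θ R : ℝ) (hψ : 0 < ψ) (hΘ : 0 < Θ) (hR : 0 < R)
    (C : ℝ) (hC : C = R / (1 + Θ * (Real.exp ψ - 1) / ψ))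
    (θ : ℝ) (hθ : θ = ψ / C) :
    0 < C ∧ C < R ∧ 0 < θ ∧
    θ * R = ψ + Θ * (Real.exp ψ - 1) ∧
    Real.exp (θ * R) = (Real.exp (-ψ))⁻¹ *
      Real.exp (-Θ * (1 - (Real.exp (-ψ))⁻¹)) := by
  have hexp : 1 < Real.exp ψ := by
    have := Real.add_one_lt_exp (ne_of_gt hψ); linarith
  have hpos : 0 < Θ * (Real.exp ψ - 1) / ψ :=
    div_pos (mul_pos hΘ (by linarith)) hψ
  have hD : 1 < 1 + Θ * (Real.exp ψ - 1) / ψ := by linarith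
  have hCpos : 0 < C := by rw [hC]; positivity
  have hClt : C < R := by
    rw [hC]
    calc R / (1 + Θ * (Real.exp ψ - 1) / ψ) < R / 1 := by
          apply div_lt_div_of_pos_left hR one_pos hD
      _ = R := div_one R
  have hθpos : 0 < θ := by rw [hθ]; positivity
  have hθR : θ * R = ψ + Θ * (Real.exp ψ - 1) := by
    rw [hθ, hC]
    field_simp
  refine ⟨hCpos, hClt, hθpos, hθR, ?_⟩
  rw [hθR, ← Real.exp_neg, ← Real.exp_add]
  congr 1
  simp [Real.exp_neg]
  ring
end

section
/- Let 0 < Q_1 < 1, R > 0, and ψ > 0 with Q_1 e^{ψ} < 1. Define C := R / ( 1 + ψ^{−1} ln( (1 − Q_1) / (1 − Q_1 e^{ψ}) ) ) and θ := ψ / C. Then C > 0, θ > 0, and e^{−ψ} = Q_1 + (1 − Q_1) e^{−θR}; equivalently, C = −(1/θ) ln( Q_1 + (1 − Q_1) e^{−θR} ) and ψ = θ C. -/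
/-- Corollary 13: ARQ effective capacity in the
QoS-parameter `ψ`. With `C = R/(1 + ψ^{-1} ln((1-Q₁)/(1-Q₁e^ψ)))` and
`θ = ψ/C`, one has `C > 0`, `θ > 0`, `e^{-ψ} = Q₁ + (1-Q₁) e^{-θR}`,
equivalently `C = -(1/θ) ln(Q₁ + (1-Q₁)e^{-θR})` and `ψ = θ C`. -/
theorem ARQ_effective_capacity_psi
    (Q1 R ψ : ℝ) (hQ1 : 0 < Q1) (hQ1' : Q1 < 1) (hR : 0 < R) (hψ : 0 < ψ)
    (hQψ : Q1 * Real.exp ψ < 1)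
    (C : ℝ) (hC : C = R / (1 + ψ⁻¹ *
      Real.log ((1 - Q1) / (1 - Q1 * Real.exp ψ))))
    (θ : ℝ) (hθ : θ = ψ / C) :
    0 < C ∧ 0 < θ ∧
    Real.exp (-ψ) = Q1 + (1 - Q1) * Real.exp (-(θ * R)) ∧
    C = -(1 / θ) * Real.log (Q1 + (1 - Q1) * Real.exp (-(θ * R))) ∧
    ψ = θ * C := by
  set A := 1 - Q1 with hA
  set D := 1 - Q1 * Real.exp ψ with hD
  have hApos : 0 < A := by simp [hA]; linarith
  have hDpos : 0 < D := by simp [hD]; linarith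
  have hDA : D < A := by
    have h1 : 1 < Real.exp ψ := by simpa using Real.exp_lt_exp.mpr hψ
    have : Q1 * 1 < Q1 * Real.exp ψ := by
      exact mul_lt_mul_of_pos_left h1 hQ1
    simp [hA, hD]; linarith
  have hratio : 1 < A / D := (one_lt_div hDpos).mpr hDA
  set L := Real.log (A / D) with hL
  have hLpos : 0 < L := Real.log_pos hratio
  have hdenom : 0 < 1 + ψ⁻¹ * L := by positivity
  have hCpos : 0 < C := by rw [hC]; positivity
  have hθpos : 0 < θ := by rw [hθ]; positivity
  have hθR : θ * R = ψ + L := by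
    have hCne : C ≠ 0 := ne_of_gt hCpos
    have hRne : R ≠ 0 := ne_of_gt hR
    have hψne : ψ ≠ 0 := ne_of_gt hψ
    rw [hθ, hC]
    field_simp
  have hexpL : Real.exp (-L) = D / A := by
    rw [hL, ← Real.log_inv, Real.exp_log (by positivity), inv_div]
  have hkey : Real.exp (-ψ) = Q1 + (1 - Q1) * Real.exp (-(θ * R)) := by
    rw [hθR, neg_add, Real.exp_add, hexpL, ← hA]
    have hAne : A ≠ 0 := ne_of_gt hApos
    have : A * (Real.exp (-ψ) * (D / A)) = Real.exp (-ψ) * D := by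
      field_simp
    rw [this, hD]
    have hexp : Real.exp (-ψ) * Real.exp ψ = 1 := by
      rw [← Real.exp_add]; simp
    nlinarith [hexp]
  refine ⟨hCpos, hθpos, hkey, ?_, ?_⟩
  · rw [← hkey, Real.log_exp]
    field_simp [hθ]
    rw [hθ]; field_simp [hCpos.ne']
  · rw [hθ]
    field_simp
end

section
/- Let θ > 0 and Γ > 0 be real, and define g : (0, ∞) → ℝ by g(R) := e^{−(2^R − 1)/Γ} · (e^{−θR} − 1). Then g is differentiable on (0, ∞), and for every R > 0 the derivative g′(R) = 0 if and only if Γ = ln(2) · 2^R · (e^{θR} − 1) / θ. -/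
lemma ARQ_hasDerivAt (θ Γ : ℝ) (R : ℝ) :
    HasDerivAt (fun R : ℝ => Real.exp (-(((2 : ℝ) ^ R - 1) / Γ)) *
        (Real.exp (-(θ * R)) - 1))
      (Real.exp (-(((2 : ℝ) ^ R - 1) / Γ)) * (-(((2 : ℝ) ^ R * Real.log 2) / Γ)) *
          (Real.exp (-(θ * R)) - 1)
        + Real.exp (-(((2 : ℝ) ^ R - 1) / Γ)) * (Real.exp (-(θ * R)) * (-θ))) R := by
  have hE : HasDerivAt (fun R : ℝ => (2 : ℝ) ^ R) ((2 : ℝ) ^ R * Real.log 2) R :=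
    (Real.hasStrictDerivAt_const_rpow two_pos R).hasDerivAt
  have h3 : HasDerivAt (fun R : ℝ => -(((2 : ℝ) ^ R - 1) / Γ))
      (-(((2 : ℝ) ^ R * Real.log 2) / Γ)) R := ((hE.sub_const 1).div_const Γ).neg
  have h5 : HasDerivAt (fun R : ℝ => Real.exp (-(θ * R)) - 1)
      (Real.exp (-(θ * R)) * (-θ)) R := by
    have h0 : HasDerivAt (fun R : ℝ => -(θ * R)) (-θ) R := by
      exact ((hasDerivAt_id' R).const_mul θ).neg.congr_deriv (by simp)
    exact (h0.exp.sub_const 1)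
  exact h3.exp.mul h5

/-- Corollary 17 / Appendix H: first-order optimality
condition for the rate-optimized effective capacity of ARQ in Rayleigh
fading. The function `g(R) = e^{-(2^R - 1)/Γ}(e^{-θR} - 1)` is
differentiable on `(0,∞)`, and for `R > 0`, `g'(R) = 0` iff
`Γ = ln(2) · 2^R (e^{θR} - 1)/θ`. -/
theorem ARQ_rate_optimality_condition
    (θ Γ : ℝ) (hθ : 0 < θ) (hΓ : 0 < Γ) :
    (∀ R : ℝ, 0 < R → DifferentiableAt ℝ
      (fun R : ℝ => Real.exp (-(((2 : ℝ) ^ R - 1) / Γ)) *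
        (Real.exp (-(θ * R)) - 1)) R) ∧
    (∀ R : ℝ, 0 < R →
      (deriv (fun R : ℝ => Real.exp (-(((2 : ℝ) ^ R - 1) / Γ)) *
          (Real.exp (-(θ * R)) - 1)) R = 0 ↔
        Γ = Real.log 2 * (2 : ℝ) ^ R * (Real.exp (θ * R) - 1) / θ)) := by
  constructor
  · intro R _; exact (ARQ_hasDerivAt θ Γ R).differentiableAt
  · intro R hR
    rw [(ARQ_hasDerivAt θ Γ R).deriv]
    set A := Real.exp (-(((2 : ℝ) ^ R - 1) / Γ)) with hA
    set E := (2 : ℝ) ^ R with hEdef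
    set B := Real.exp (-(θ * R)) with hBdef
    set C := Real.exp (θ * R) with hCdef
    have hBC : B * C = 1 := by
      rw [hBdef, hCdef, ← Real.exp_add]; simp
    have hApos : (0 : ℝ) < A := Real.exp_pos _
    rw [show A * (-(E * Real.log 2 / Γ)) * (B - 1) + A * (B * -θ)
        = A * ((-(E * Real.log 2 / Γ)) * (B - 1) + B * (-θ)) from by ring,
      mul_eq_zero]
    simp only [hApos.ne', false_or]
    rw [eq_div_iff hθ.ne']
    constructor
    · intro h
      have h' : E * Real.log 2 * (B - 1) + B * θ * Γ = 0 := by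
        field_simp at h
        linarith
      linear_combination C * h' - (E * Real.log 2 + θ * Γ) * hBC
    · intro h
      have hB0 : B ≠ 0 := (Real.exp_pos _).ne'
      field_simp
      linear_combination (-B) * h - E * Real.log 2 * hBC
end
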